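/- If G ⊆ X₁ × ⋯ × X_d admits a c-splitting tuple (φ₁,…,φ_d) and c is continuous, then G admits a c-splitting tuple consisting of upper semicontinuous (in particular Borel measurable) functions, obtained by successively replacing each φᵢ with the infimal conjugate-type function φ̃_{i+1}(x⁰_{i+1}) = inf over the other coordinates of c(x₁,…,x⁰_{i+1},…,x_d) − φ̃₁(x₁) − ⋯ − φ̃ᵢ(xᵢ) − φ_{i+2}(x_{i+2}) − ⋯ − φ_d(x_d). -/

import Mathlib

open scoped BigOperators

noncomputable section

/-- `(φ₁, …, φ_d)` is a `(G, c)`-splitting tuple: functions `Xᵢ → [-∞, ∞)` whose sum is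
everywhere at most `c`, with equality on `G`. -/
def IsSplittingTuple {d : ℕ} {X : Fin d → Type*} (c : (∀ i, X i) → ℝ)
    (G : Set (∀ i, X i)) (φ : ∀ i, X i → EReal) : Prop :=
  (∀ i x, φ i x < ⊤) ∧
  (∀ x : ∀ i, X i, ∑ i, φ i (x i) ≤ (c x : EReal)) ∧
  (∀ x ∈ G, ∑ i, φ i (x i) = (c x : EReal))

namespace SplittingAux

variable {d : ℕ} {X : Fin d → Type*}

/-- a sum of EReals, none of which is `⊤`, is not `⊤`. -/
lemma sum_ne_top {ι : Type*} {s : Finset ι} {f : ι → EReal} (h : ∀ i ∈ s, f i ≠ ⊤) :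
    ∑ i ∈ s, f i ≠ ⊤ := by
  induction s using Finset.cons_induction with
  | empty => simp
  | cons a s ha ih =>
    rw [Finset.sum_cons]
    exact (EReal.add_lt_top (h a (Finset.mem_cons_self a s))
      (ih fun i hi => h i (Finset.mem_cons_of_mem hi))).ne

/-- a sum containing a `⊥` term is `⊥`. -/
lemma sum_eq_bot {ι : Type*} [DecidableEq ι] {s : Finset ι} {f : ι → EReal} {i : ι} (hi : i ∈ s)
    (hf : f i = ⊥) : ∑ j ∈ s, f j = ⊥ := by
  rw [← Finset.add_sum_erase _ _ hi, hf, EReal.bot_add]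

lemma sum_update_point (φ : ∀ i, X i → EReal) (i : Fin d) (x : ∀ j, X j) (y : X i) :
    ∑ j, φ j (Function.update x i y j)
      = φ i y + ∑ j ∈ Finset.univ.erase i, φ j (x j) := by
  rw [← Finset.add_sum_erase _ (fun j => φ j (Function.update x i y j)) (Finset.mem_univ i)]
  congr 1
  · rw [Function.update_self]
  · refine Finset.sum_congr rfl fun j hj => ?_
    rw [Function.update_of_ne (Finset.ne_of_mem_erase hj)]

lemma sum_update_fn (φ : ∀ i, X i → EReal) (i : Fin d) (f : X i → EReal) (x : ∀ j, X j) :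
    ∑ j, Function.update φ i f j (x j)
      = f (x i) + ∑ j ∈ Finset.univ.erase i, φ j (x j) := by
  rw [← Finset.add_sum_erase _ (fun j => Function.update φ i f j (x j)) (Finset.mem_univ i)]
  congr 1
  · rw [Function.update_self]
  · refine Finset.sum_congr rfl fun j hj => ?_
    rw [Function.update_of_ne (Finset.ne_of_mem_erase hj)]

/-- The conjugate-type function replacing the `i`-th component. -/
def conjFn (c : (∀ i, X i) → ℝ) (φ : ∀ i, X i → EReal) (i : Fin d) (y : X i) : EReal :=
  ⨅ x : ∀ j, X j,
    ((c (Function.update x i y) : EReal) - ∑ j ∈ Finset.univ.erase i, φ j (x j))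

section Step

variable {c : (∀ i, X i) → ℝ} {G : Set (∀ i, X i)} {φ : ∀ i, X i → EReal}

/-- The conjugate dominates the original component. -/
lemma le_conjFn (hφ : IsSplittingTuple c G φ) (i : Fin d) (y : X i) :
    φ i y ≤ conjFn c φ i y := by
  refine le_iInf fun x => ?_
  set s : EReal := ∑ j ∈ Finset.univ.erase i, φ j (x j) with hs
  have hsum : φ i y + s ≤ (c (Function.update x i y) : EReal) := by
    have := hφ.2.1 (Function.update x i y)
    rwa [sum_update_point φ i x y] at this
  have hstop : s ≠ ⊤ := sum_ne_top fun j _ => (hφ.1 j (x j)).ne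
  rcases eq_or_ne s ⊥ with hb | hb
  · rw [hb, EReal.coe_sub_bot]; exact le_top
  · exact (EReal.le_sub_iff_add_le (Or.inl hb) (Or.inl hstop)).2 hsum

lemma conjFn_add_le (hφ : IsSplittingTuple c G φ) (i : Fin d) (x : ∀ j, X j) :
    conjFn c φ i (x i) + ∑ j ∈ Finset.univ.erase i, φ j (x j) ≤ (c x : EReal) := by
  set s : EReal := ∑ j ∈ Finset.univ.erase i, φ j (x j) with hs
  have h1 : conjFn c φ i (x i) ≤ (c x : EReal) - s := by
    have := iInf_le (fun z : ∀ j, X j =>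
      ((c (Function.update z i (x i)) : EReal) - ∑ j ∈ Finset.univ.erase i, φ j (z j))) x
    rwa [Function.update_eq_self] at this
  have hstop : s ≠ ⊤ := sum_ne_top fun j _ => (hφ.1 j (x j)).ne
  calc conjFn c φ i (x i) + s ≤ ((c x : EReal) - s) + s :=
        add_le_add_left h1 s
    _ ≤ (c x : EReal) := by
        rcases eq_or_ne s ⊥ with hb | hb
        · rw [hb, EReal.add_bot]; exact bot_le
        · obtain ⟨r, hr⟩ : ∃ r : ℝ, s = (r : EReal) :=
            ⟨s.toReal, (EReal.coe_toReal hstop hb).symm⟩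
          exact (by rw [hr, ← EReal.coe_sub, ← EReal.coe_add, sub_add_cancel] :
              ((c x : EReal) - s) + s = (c x : EReal)).le

/-- the replacement step preserves the splitting property, provided `G` is nonempty. -/
lemma step_splitting (hφ : IsSplittingTuple c G φ) {g : ∀ i, X i} (hg : g ∈ G) (i : Fin d) :
    IsSplittingTuple c G (Function.update φ i (conjFn c φ i)) := by
  obtain ⟨h1, h2, h3⟩ := hφ
  have hsg : ∀ i : Fin d, ∑ j ∈ Finset.univ.erase i, φ j (g j) ≠ ⊥ := by
    intro i hb
    have := h3 g hg
    rw [← Function.update_eq_self i g] at this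
    rw [sum_update_point φ i g (g i), hb, EReal.add_bot] at this
    exact (EReal.coe_ne_bot _) this.symm
  refine ⟨?_, ?_, ?_⟩
  · intro j y
    rcases eq_or_ne j i with rfl | hj
    · rw [Function.update_self]
      set s : EReal := ∑ k ∈ Finset.univ.erase j, φ k (g k) with hs
      have hstop : s ≠ ⊤ := sum_ne_top fun k _ => (h1 k (g k)).ne
      have hsb : s ≠ ⊥ := hsg j
      obtain ⟨r, hr⟩ : ∃ r : ℝ, s = (r : EReal) :=
        ⟨s.toReal, (EReal.coe_toReal hstop hsb).symm⟩
      refine lt_of_le_of_lt (iInf_le _ g) ?_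
      rw [← hs, hr, ← EReal.coe_sub]
      exact EReal.coe_lt_top _
    · rw [Function.update_of_ne hj]; exact h1 j y
  · intro x
    rw [sum_update_fn φ i (conjFn c φ i) x]
    exact conjFn_add_le ⟨h1, h2, h3⟩ i x
  · intro x hx
    refine le_antisymm ?_ ?_
    · rw [sum_update_fn φ i (conjFn c φ i) x]
      exact conjFn_add_le ⟨h1, h2, h3⟩ i x
    · rw [← h3 x hx]
      refine Finset.sum_le_sum fun j _ => ?_
      rcases eq_or_ne j i with rfl | hj
      · rw [Function.update_self]; exact le_conjFn ⟨h1, h2, h3⟩ j (x j)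
      · rw [Function.update_of_ne hj]

variable [∀ i, TopologicalSpace (X i)]

/-- The conjugate function is upper semicontinuous. -/
lemma conjFn_usc (hc : Continuous c) (h1 : ∀ i x, φ i x < ⊤) (i : Fin d) :
    UpperSemicontinuous (conjFn c φ i) := by
  refine upperSemicontinuous_iInf fun x => ?_
  set s : EReal := ∑ j ∈ Finset.univ.erase i, φ j (x j) with hs
  have hstop : s ≠ ⊤ := sum_ne_top fun j _ => (h1 j (x j)).ne
  have hcont : Continuous fun y : X i => c (Function.update x i y) :=
    hc.comp (continuous_const.update i continuous_id)
  rcases eq_or_ne s ⊥ with hb | hb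
  · have : (fun y : X i => ((c (Function.update x i y) : EReal) - s))
        = fun _ => (⊤ : EReal) := by
      funext y; rw [hb, EReal.coe_sub_bot]
    rw [this]
    exact upperSemicontinuous_const
  · obtain ⟨r, hr⟩ : ∃ r : ℝ, s = (r : EReal) :=
      ⟨s.toReal, (EReal.coe_toReal hstop hb).symm⟩
    have : (fun y : X i => ((c (Function.update x i y) : EReal) - s))
        = fun y => ((c (Function.update x i y) - r : ℝ) : EReal) := by
      funext y; rw [hr, EReal.coe_sub]
    rw [this]
    exact (continuous_coe_real_ereal.comp (hcont.sub continuous_const)).upperSemicontinuous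

end Step

/-- Iterate the replacement step through the coordinates. -/
def iterTuple (c : (∀ i, X i) → ℝ) (φ : ∀ i, X i → EReal) : ℕ → ∀ i, X i → EReal
  | 0 => φ
  | k + 1 =>
    if h : k < d then
      Function.update (iterTuple c φ k) ⟨k, h⟩ (conjFn c (iterTuple c φ k) ⟨k, h⟩)
    else iterTuple c φ k

end SplittingAux

/-- If `G` is a `c`-splitting set and `c` is continuous, then there is a `(G, c)`-splitting
tuple consisting of upper semicontinuous (in particular Borel measurable) functions. -/
theorem exists_usc_splittingTuple {d : ℕ} {X : Fin d → Type*}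
    [∀ i, TopologicalSpace (X i)] [∀ i, PolishSpace (X i)]
    [∀ i, MeasurableSpace (X i)] [∀ i, BorelSpace (X i)]
    (c : (∀ i, X i) → ℝ) (hc : Continuous c)
    (G : Set (∀ i, X i)) (φ : ∀ i, X i → EReal)
    (hφ : IsSplittingTuple c G φ) :
    ∃ ψ : ∀ i, X i → EReal, IsSplittingTuple c G ψ ∧
      ∀ i, UpperSemicontinuous (ψ i) ∧ Measurable (ψ i) := by
  classical
  rcases isEmpty_or_nonempty (Fin d) with hd | hd
  · exact ⟨φ, hφ, fun i => isEmptyElim i⟩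
  rcases G.eq_empty_or_nonempty with rfl | ⟨g, hg⟩
  · refine ⟨fun _ _ => ⊥, ⟨?_, ?_, ?_⟩, ?_⟩
    · intro i x; exact bot_lt_top
    · intro x
      rw [SplittingAux.sum_eq_bot (Finset.mem_univ (Classical.arbitrary (Fin d))) rfl]
      exact bot_le
    · intro x hx; exact absurd hx (Set.notMem_empty x)
    · intro i
      exact ⟨upperSemicontinuous_const, measurable_const⟩
  · -- main case: `G` nonempty, iterate the conjugation through all coordinates
    have main : ∀ k : ℕ, IsSplittingTuple c G (SplittingAux.iterTuple c φ k) ∧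
        ∀ i : Fin d, (i : ℕ) < k →
          UpperSemicontinuous (SplittingAux.iterTuple c φ k i) := by
      intro k
      induction k with
      | zero => exact ⟨hφ, fun i hi => absurd hi (Nat.not_lt_zero _)⟩
      | succ k ih =>
        obtain ⟨ihs, ihu⟩ := ih
        by_cases h : k < d
        · have hiter : SplittingAux.iterTuple c φ (k + 1)
              = Function.update (SplittingAux.iterTuple c φ k) ⟨k, h⟩
                (SplittingAux.conjFn c (SplittingAux.iterTuple c φ k) ⟨k, h⟩) := by
            rw [SplittingAux.iterTuple, dif_pos h]
          refine ⟨?_, ?_⟩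
          · rw [hiter]; exact SplittingAux.step_splitting ihs hg _
          · intro i hi
            rw [hiter]
            rcases eq_or_ne i ⟨k, h⟩ with rfl | hik
            · rw [Function.update_self]
              exact SplittingAux.conjFn_usc hc ihs.1 _
            · rw [Function.update_of_ne hik]
              refine ihu i ?_
              rcases Nat.lt_succ_iff_lt_or_eq.1 hi with h' | h'
              · exact h'
              · exact absurd (Fin.ext h') hik
        · have hiter : SplittingAux.iterTuple c φ (k + 1)
              = SplittingAux.iterTuple c φ k := by
            rw [SplittingAux.iterTuple, dif_neg h]
          refine ⟨hiter ▸ ihs, fun i hi => ?_⟩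
          rw [hiter]
          exact ihu i (lt_of_lt_of_le i.isLt (Nat.le_of_not_lt h))
    refine ⟨SplittingAux.iterTuple c φ d, (main d).1, fun i => ?_⟩
    have husc := (main d).2 i i.isLt
    exact ⟨husc, husc.measurable⟩
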